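/- Let A ⊆ ℂ be an infinite set of nonzero complex numbers, and let (a_n)_{n∈ℕ} and (c_n)_{n∈ℕ} be two injective sequences, each with range exactly A. Suppose each of the two ratio sequences a_{n+1}/a_n and c_{n+1}/c_n either diverges in absolute value to ∞ or converges to a complex number of modulus greater than 1. Then either both ratio sequences diverge in absolute value to ∞, or both converge and lim_{n→∞} a_{n+1}/a_n = lim_{n→∞} c_{n+1}/c_n. -/

import Mathlib

open Filter

/-- Growth lemma: a lacunary enumeration has eventually strictly increasing modulus,
and its modulus tends to infinity. -/
lemma lacunary_growth (A : Set ℂ) (h0 : ∀ x ∈ A, x ≠ 0) (b : ℕ → ℂ)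
    (hrange : Set.range b = A)
    (hlac : Tendsto (fun n => ‖b (n + 1) / b n‖) atTop atTop ∨
      ∃ κ : ℂ, 1 < ‖κ‖ ∧ Tendsto (fun n => b (n + 1) / b n) atTop (nhds κ)) :
    ∃ N : ℕ, (∀ i j, N ≤ i → i < j → ‖b i‖ < ‖b j‖) ∧
      Tendsto (fun n => ‖b n‖) atTop atTop := by
  have hb0 : ∀ n, b n ≠ 0 := fun n => h0 _ (hrange ▸ Set.mem_range_self n)
  have habs_pos : ∀ n, 0 < ‖b n‖ := fun n => by
    simpa [norm_pos_iff] using hb0 n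
  -- get a ratio bound r > 1
  obtain ⟨r, hr1, N, hstep⟩ :
      ∃ r : ℝ, 1 < r ∧ ∃ N, ∀ n ≥ N, r * ‖b n‖ ≤ ‖b (n + 1)‖ := by
    rcases hlac with h | ⟨κ, hκ, h⟩
    · refine ⟨2, one_lt_two, ?_⟩
      obtain ⟨N, hN⟩ := (h.eventually_ge_atTop 2).exists_forall_of_atTop
      refine ⟨N, fun n hn => ?_⟩
      have := hN n hn
      rw [norm_div] at this
      calc 2 * ‖b n‖ ≤ ‖b (n+1)‖ / ‖b n‖ * ‖b n‖ := by
            exact mul_le_mul_of_nonneg_right this (norm_nonneg _)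
        _ = ‖b (n+1)‖ := div_mul_cancel₀ _ (ne_of_gt (habs_pos n))
    · refine ⟨(1 + ‖κ‖) / 2, by linarith, ?_⟩
      have habs : Tendsto (fun n => ‖b (n + 1) / b n‖) atTop (nhds (‖κ‖)) := by
        exact h.norm
      have hlt : (1 + ‖κ‖) / 2 < ‖κ‖ := by linarith
      obtain ⟨N, hN⟩ := (habs.eventually_const_le hlt).exists_forall_of_atTop
      refine ⟨N, fun n hn => ?_⟩
      have := hN n hn
      rw [norm_div] at this
      calc (1 + ‖κ‖) / 2 * ‖b n‖
          ≤ ‖b (n+1)‖ / ‖b n‖ * ‖b n‖ :=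
            mul_le_mul_of_nonneg_right this (norm_nonneg _)
        _ = ‖b (n+1)‖ := div_mul_cancel₀ _ (ne_of_gt (habs_pos n))
  have hlt_succ : ∀ n, N ≤ n → ‖b n‖ < ‖b (n + 1)‖ := by
    intro n hn
    have h1 := hstep n hn
    have : ‖b n‖ < r * ‖b n‖ :=
      (lt_mul_iff_one_lt_left (habs_pos n)).2 hr1
    linarith
  have hmono : ∀ i j, N ≤ i → i < j → ‖b i‖ < ‖b j‖ := by
    intro i j hNi hij
    have : StrictMono (fun k => ‖b (N + k)‖) := by
      apply strictMono_nat_of_lt_succ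
      intro k
      simp only [Nat.add_succ]
      exact hlt_succ (N + k) (Nat.le_add_right _ _)
    have hi : i = N + (i - N) := by omega
    have hj : j = N + (j - N) := by omega
    rw [hi, hj]
    exact this (by omega)
  refine ⟨N, hmono, ?_⟩
  -- geometric lower bound gives divergence
  have hgeom : ∀ n, r ^ n * ‖b N‖ ≤ ‖b (n + N)‖ := by
    intro n
    induction n with
    | zero => simp
    | succ k ih =>
      have h1 := hstep (k + N) (Nat.le_add_left _ _)
      calc r ^ (k + 1) * ‖b N‖ = r * (r ^ k * ‖b N‖) := by ring
        _ ≤ r * ‖b (k + N)‖ :=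
            mul_le_mul_of_nonneg_left ih (by linarith)
        _ ≤ ‖b (k + N + 1)‖ := h1
        _ = ‖b (k + 1 + N)‖ := by rw [show k + N + 1 = k + 1 + N by omega]
  have hdiv : Tendsto (fun n => ‖b (n + N)‖) atTop atTop :=
    tendsto_atTop_mono hgeom
      ((tendsto_pow_atTop_atTop_of_one_lt hr1).atTop_mul_const (habs_pos N))
  exact (tendsto_add_atTop_iff_nat N).1 hdiv

/-- well-definedness of the strongly lacunary dichotomy and the Kepler limit.
If an infinite set `A ⊆ ℂ` of nonzero complex numbers is enumerated by two injective
sequences, each of whose consecutive-ratio sequences either diverges in absolute value to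
`∞` or converges to a complex number of modulus `> 1`, then either both ratio sequences
diverge, or both converge to the same limit. -/
theorem kepler_limit_well_defined (A : Set ℂ) (hA : A.Infinite) (h0 : ∀ x ∈ A, x ≠ 0)
    (a c : ℕ → ℂ) (ha : Function.Injective a) (hc : Function.Injective c)
    (hrange_a : Set.range a = A) (hrange_c : Set.range c = A)
    (hlac_a : Tendsto (fun n => ‖a (n + 1) / a n‖) atTop atTop ∨
      ∃ κ : ℂ, 1 < ‖κ‖ ∧ Tendsto (fun n => a (n + 1) / a n) atTop (nhds κ))
    (hlac_c : Tendsto (fun n => ‖c (n + 1) / c n‖) atTop atTop ∨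
      ∃ κ : ℂ, 1 < ‖κ‖ ∧ Tendsto (fun n => c (n + 1) / c n) atTop (nhds κ)) :
    (Tendsto (fun n => ‖a (n + 1) / a n‖) atTop atTop ∧
      Tendsto (fun n => ‖c (n + 1) / c n‖) atTop atTop) ∨
    (∃ κ : ℂ, Tendsto (fun n => a (n + 1) / a n) atTop (nhds κ) ∧
      Tendsto (fun n => c (n + 1) / c n) atTop (nhds κ)) := by
  obtain ⟨Na, hamono, hadiv⟩ := lacunary_growth A h0 a hrange_a hlac_a
  obtain ⟨Nc, hcmono, hcdiv⟩ := lacunary_growth A h0 c hrange_c hlac_c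
  -- bounds on the finite prefixes
  obtain ⟨Ba, hBa⟩ := ((Finset.range Na).image fun m => ‖a m‖).exists_le
  obtain ⟨Bc, hBc⟩ := ((Finset.range Nc).image fun m => ‖c m‖).exists_le
  have hBa' : ∀ m, Ba < ‖a m‖ → Na ≤ m := by
    intro m hm
    by_contra hlt
    have := hBa (‖a m‖)
      (Finset.mem_image_of_mem (fun m => ‖a m‖) (Finset.mem_range.2 (by omega)))
    linarith
  have hBc' : ∀ m, Bc < ‖c m‖ → Nc ≤ m := by
    intro m hm
    by_contra hlt
    have := hBc (‖c m‖)
      (Finset.mem_image_of_mem (fun m => ‖c m‖) (Finset.mem_range.2 (by omega)))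
    linarith
  -- the index translation φ : c n = a (φ n)
  have hφex : ∀ n, ∃ m, a m = c n := by
    intro n
    have : c n ∈ A := hrange_c ▸ Set.mem_range_self n
    rw [← hrange_a] at this
    exact this
  choose φ hφ using hφex
  -- choose K large enough
  obtain ⟨K0, hK0⟩ := (hcdiv.eventually_gt_atTop (max Ba Bc)).exists_forall_of_atTop
  set K := max K0 Nc with hKdef
  have hKc : ∀ n, K ≤ n → max Ba Bc < ‖c n‖ := fun n hn =>
    hK0 n (le_trans (le_max_left _ _) hn)
  have hKNc : Nc ≤ K := le_max_right _ _
  -- for n ≥ K, φ n ≥ Na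
  have hφNa : ∀ n, K ≤ n → Na ≤ φ n := by
    intro n hn
    apply hBa' (φ n)
    rw [hφ n]
    exact lt_of_le_of_lt (le_max_left _ _) (hKc n hn)
  -- the key step: φ (n+1) = φ n + 1 for n ≥ K
  have hstep : ∀ n, K ≤ n → φ (n + 1) = φ n + 1 := by
    intro n hn
    have h1 : ‖a (φ n)‖ < ‖a (φ (n + 1))‖ := by
      rw [hφ n, hφ (n + 1)]
      exact hcmono n (n + 1) (le_trans hKNc hn) (Nat.lt_succ_self n)
    have hφlt : φ n < φ (n + 1) := by
      by_contra hle
      push_neg at hle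
      rcases lt_or_eq_of_le hle with h | h
      · exact absurd (hamono _ _ (hφNa (n + 1) (by omega)) h) (by linarith)
      · rw [h] at h1; exact lt_irrefl _ h1
    by_contra hne
    have hm : φ n + 1 < φ (n + 1) := by omega
    set m := φ n + 1 with hmdef
    have hm1 : ‖a (φ n)‖ < ‖a m‖ :=
      hamono _ _ (hφNa n hn) (Nat.lt_succ_self _)
    have hm2 : ‖a m‖ < ‖a (φ (n + 1))‖ :=
      hamono _ _ (by have := hφNa n hn; omega) hm
    -- a m = c j for some j
    have : a m ∈ A := hrange_a ▸ Set.mem_range_self m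
    rw [← hrange_c] at this
    obtain ⟨j, hj⟩ := this
    rw [← hj] at hm1 hm2
    rw [hφ n] at hm1
    rw [hφ (n + 1)] at hm2
    -- j ≥ Nc
    have hjNc : Nc ≤ j := by
      apply hBc'
      calc Bc ≤ max Ba Bc := le_max_right _ _
        _ < ‖c n‖ := hKc n hn
        _ < ‖c j‖ := hm1
    have hnj : n < j := by
      by_contra hle
      push_neg at hle
      rcases lt_or_eq_of_le hle with h | h
      · exact absurd (hcmono j n hjNc h) (by linarith)
      · rw [h] at hm1; exact lt_irrefl _ hm1
    have hjn : j < n + 1 := by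
      by_contra hle
      push_neg at hle
      rcases lt_or_eq_of_le hle with h | h
      · exact absurd (hcmono (n + 1) j (le_trans hKNc (by omega)) h) (by linarith)
      · rw [← h] at hm2; exact lt_irrefl _ hm2
    omega
  -- linearity: φ (K + n) = φ K + n
  have hφlin : ∀ n, φ (K + n) = φ K + n := by
    intro n
    induction n with
    | zero => simp
    | succ k ih =>
      have := hstep (K + k) (Nat.le_add_right _ _)
      rw [← Nat.add_assoc, this, ih]
      omega
  -- ratio equality (shifted)
  have hratio : ∀ n, c (n + K + 1) / c (n + K) = a (n + φ K + 1) / a (n + φ K) := by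
    intro n
    have e1 : c (n + K) = a (φ K + n) := by
      rw [← hφ (n + K), Nat.add_comm n K, hφlin n]
    have e2 : c (n + K + 1) = a (φ K + n + 1) := by
      have : n + K + 1 = K + (n + 1) := by omega
      rw [this, ← hφ (K + (n + 1)), hφlin (n + 1)]
      ring_nf
    rw [e1, e2]
    ring_nf
  rcases hlac_a with h | ⟨κ, hκ, h⟩
  · left
    refine ⟨h, ?_⟩
    rw [← tendsto_add_atTop_iff_nat K]
    have : (fun n => ‖c (n + K + 1) / c (n + K)‖) =
        fun n => ‖a (n + φ K + 1) / a (n + φ K)‖ := by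
      funext n; rw [hratio n]
    simp only [this]
    exact (tendsto_add_atTop_iff_nat (φ K)).2 h
  · right
    refine ⟨κ, h, ?_⟩
    rw [← tendsto_add_atTop_iff_nat K]
    have : (fun n => c (n + K + 1) / c (n + K)) =
        fun n => a (n + φ K + 1) / a (n + φ K) := by
      funext n; rw [hratio n]
    simp only [this]
    exact (tendsto_add_atTop_iff_nat (φ K)).2 h
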